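/- Interval observer soundness for discrete-time LTI systems: Let F ∈ ℝ^{n×n}, H ∈ ℝ^{p×n}, D ∈ ℝ^{n×q}, W ∈ ℝ^{p×r}, and let A ∈ ℝ^{n×n} be entrywise nonnegative, B ∈ ℝ^{n×p}, and T ∈ ℝ^{n×n} an invertible solution of T F = A T + B H. Suppose x_{k+1} = F x_k + u_k + D d_k, y_k = H x_k + W w_k, with known componentwise bounds d̲_k ≤ d_k ≤ d̄_k, w̲_k ≤ w_k ≤ w̄_k and x̲_0 ≤ x_0 ≤ x̄_0. Define z̄_0 = T⊕ x̄_0 − T⊖ x̲_0, z̲_0 = T⊕ x̲_0 − T⊖ x̄_0, and for k ≥ 0: z̄_{k+1} = A z̄_k + B y_k + T u_k + (TD)⊕ d̄_k − (TD)⊖ d̲_k + (BW)⊖ w̄_k − (BW)⊕ w̲_k, and z̲_{k+1} = A z̲_k + B y_k + T u_k + (TD)⊕ d̲_k − (TD)⊖ d̄_k + (BW)⊖ w̲_k − (BW)⊕ w̄_k. Then z̲_k ≤ T x_k ≤ z̄_k for all k ∈ ℕ. -/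
import Mathlib


lemma mulVec_mono {m n : ℕ} {M : Matrix (Fin m) (Fin n) ℝ} (hM : ∀ i j, 0 ≤ M i j)
    {v w : Fin n → ℝ} (h : v ≤ w) : M.mulVec v ≤ M.mulVec w := by
  intro i
  simp only [Matrix.mulVec, dotProduct]
  exact Finset.sum_le_sum fun j _ => mul_le_mul_of_nonneg_left (h j) (hM i j)

def matPos {m n : ℕ} (A : Matrix (Fin m) (Fin n) ℝ) : Matrix (Fin m) (Fin n) ℝ :=
  fun i j => max 0 (A i j)

def matNeg {m n : ℕ} (A : Matrix (Fin m) (Fin n) ℝ) : Matrix (Fin m) (Fin n) ℝ :=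
  matPos A - A

lemma matPos_nonneg {m n : ℕ} (M : Matrix (Fin m) (Fin n) ℝ) : ∀ i j, 0 ≤ matPos M i j :=
  fun i j => le_max_left _ _

lemma matNeg_nonneg {m n : ℕ} (M : Matrix (Fin m) (Fin n) ℝ) : ∀ i j, 0 ≤ matNeg M i j := by
  intro i j
  simp only [matNeg, matPos, Matrix.sub_apply, sub_nonneg]
  exact le_max_right _ _

lemma mulVec_split {m n : ℕ} (M : Matrix (Fin m) (Fin n) ℝ) (v : Fin n → ℝ) :
    M.mulVec v = (matPos M).mulVec v - (matNeg M).mulVec v := by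
  have : M = matPos M - matNeg M := by
    ext i j; simp [matNeg]
  conv_lhs => rw [this]
  rw [Matrix.sub_mulVec]

lemma bound_up {m n : ℕ} (M : Matrix (Fin m) (Fin n) ℝ) {a s b : Fin n → ℝ}
    (h1 : a ≤ s) (h2 : s ≤ b) :
    M.mulVec s ≤ (matPos M).mulVec b - (matNeg M).mulVec a := by
  rw [mulVec_split]
  intro i
  have h3 := mulVec_mono (matPos_nonneg M) h2 i
  have h4 := mulVec_mono (matNeg_nonneg M) h1 i
  simp only [Pi.sub_apply] at *
  linarith

lemma bound_low {m n : ℕ} (M : Matrix (Fin m) (Fin n) ℝ) {a s b : Fin n → ℝ}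
    (h1 : a ≤ s) (h2 : s ≤ b) :
    (matPos M).mulVec a - (matNeg M).mulVec b ≤ M.mulVec s := by
  conv_rhs => rw [mulVec_split]
  intro i
  have h3 := mulVec_mono (matPos_nonneg M) h1 i
  have h4 := mulVec_mono (matNeg_nonneg M) h2 i
  simp only [Pi.sub_apply] at *
  linarith

theorem interval_observer_soundness_z {n p q r : ℕ}
    (F A T : Matrix (Fin n) (Fin n) ℝ) (H : Matrix (Fin p) (Fin n) ℝ)
    (D : Matrix (Fin n) (Fin q) ℝ) (W : Matrix (Fin p) (Fin r) ℝ)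
    (B : Matrix (Fin n) (Fin p) ℝ)
    (hA : ∀ i j, 0 ≤ A i j) (hTinv : IsUnit T.det)
    (hSyl : T * F = A * T + B * H)
    (x u : ℕ → Fin n → ℝ) (y : ℕ → Fin p → ℝ)
    (d dbar dlow : ℕ → Fin q → ℝ) (w wbar wlow : ℕ → Fin r → ℝ)
    (zbar zlow : ℕ → Fin n → ℝ) (xbar0 xlow0 : Fin n → ℝ)
    (hx : ∀ k, x (k + 1) = F.mulVec (x k) + u k + D.mulVec (d k))
    (hy : ∀ k, y k = H.mulVec (x k) + W.mulVec (w k))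
    (hd : ∀ k, dlow k ≤ d k ∧ d k ≤ dbar k)
    (hw : ∀ k, wlow k ≤ w k ∧ w k ≤ wbar k)
    (hx0 : xlow0 ≤ x 0 ∧ x 0 ≤ xbar0)
    (hz0 : zbar 0 = (matPos T).mulVec xbar0 - (matNeg T).mulVec xlow0 ∧
           zlow 0 = (matPos T).mulVec xlow0 - (matNeg T).mulVec xbar0)
    (hzbar : ∀ k, zbar (k + 1) = A.mulVec (zbar k) + B.mulVec (y k) + T.mulVec (u k)
      + (matPos (T * D)).mulVec (dbar k) - (matNeg (T * D)).mulVec (dlow k)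
      + (matNeg (B * W)).mulVec (wbar k) - (matPos (B * W)).mulVec (wlow k))
    (hzlow : ∀ k, zlow (k + 1) = A.mulVec (zlow k) + B.mulVec (y k) + T.mulVec (u k)
      + (matPos (T * D)).mulVec (dlow k) - (matNeg (T * D)).mulVec (dbar k)
      + (matNeg (B * W)).mulVec (wlow k) - (matPos (B * W)).mulVec (wbar k)) :
    ∀ k, zlow k ≤ T.mulVec (x k) ∧ T.mulVec (x k) ≤ zbar k := by
  intro k
  induction k with
  | zero =>
    constructor
    · rw [hz0.2]; exact bound_low T hx0.1 hx0.2
    · rw [hz0.1]; exact bound_up T hx0.1 hx0.2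
  | succ k ih =>
    -- key recursion for T x (k+1)
    have h1 : T.mulVec (x (k + 1)) =
        A.mulVec (T.mulVec (x k)) + B.mulVec (y k) + T.mulVec (u k)
        + (T * D).mulVec (d k) - (B * W).mulVec (w k) := by
      have hS : T.mulVec (F.mulVec (x k)) =
          A.mulVec (T.mulVec (x k)) + B.mulVec (H.mulVec (x k)) := by
        rw [Matrix.mulVec_mulVec, hSyl, Matrix.add_mulVec, ← Matrix.mulVec_mulVec,
          ← Matrix.mulVec_mulVec]
      rw [hx k, Matrix.mulVec_add, Matrix.mulVec_add, hS, hy k]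
      simp only [Matrix.mulVec_add, Matrix.mulVec_mulVec]
      abel
    have hd1 := bound_low (T * D) (hd k).1 (hd k).2
    have hd2 := bound_up (T * D) (hd k).1 (hd k).2
    have hw1 := bound_low (B * W) (hw k).1 (hw k).2
    have hw2 := bound_up (B * W) (hw k).1 (hw k).2
    have hA1 := mulVec_mono hA ih.1
    have hA2 := mulVec_mono hA ih.2
    constructor
    · rw [h1, hzlow k]
      intro i
      have := hd1 i
      have := hw2 i
      have := hA1 i
      simp only [Pi.add_apply, Pi.sub_apply] at *
      linarith
    · rw [h1, hzbar k]
      intro i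
      have := hd2 i
      have := hw1 i
      have := hA2 i
      simp only [Pi.add_apply, Pi.sub_apply] at *
      linarith
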